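/- For every n ≥ 2, if G is the star graph K_{1,n} and v is its universal (center) vertex, then γst(G − v) = γst(G) + deg_G(v) − 1; that is, γst(K_{1,n} − v) = n = γst(K_{1,n}) + n − 1. In particular, the upper bound γst(G − v) ≤ γst(G) + deg_G(v) − 1 is tight. -/

import Mathlib

/-- The degree of a vertex `x` in a graph `G`. -/
noncomputable def sdeg {V : Type*} (G : SimpleGraph V) (x : V) : ℕ :=
  (G.neighborSet x).ncard

/-- `D` is a strong dominating set of `G`: every vertex `x ∉ D` has a neighbor
`y ∈ D` with `deg x ≤ deg y`. -/
def IsStrongDominating {V : Type*} (G : SimpleGraph V) (D : Set V) : Prop :=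
  ∀ x ∉ D, ∃ y ∈ D, G.Adj x y ∧ sdeg G x ≤ sdeg G y

/-- The strong domination number of `G`. -/
noncomputable def sdn {V : Type*} (G : SimpleGraph V) : ℕ :=
  sInf {n | ∃ D : Set V, IsStrongDominating G D ∧ D.ncard = n}

/-- Vertex deletion `G - v`: the induced subgraph on the complement of `{v}`. -/
def delVtx {V : Type*} (G : SimpleGraph V) (v : V) : SimpleGraph {x : V // x ≠ v} where
  Adj a b := G.Adj a.1 b.1
  symm := ⟨by intro a b h; exact G.adj_symm h⟩
  loopless := ⟨by intro a h; exact G.irrefl h⟩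

/-- Vertex contraction `G / v`: delete `v` and put a clique on its open neighborhood. -/
def contractVtx {V : Type*} (G : SimpleGraph V) (v : V) : SimpleGraph {x : V // x ≠ v} where
  Adj a b := a ≠ b ∧ (G.Adj a.1 b.1 ∨ (G.Adj v a.1 ∧ G.Adj v b.1))
  symm := ⟨by
    rintro a b ⟨hab, h | ⟨ha, hb⟩⟩
    · exact ⟨hab.symm, Or.inl h.symm⟩
    · exact ⟨hab.symm, Or.inr ⟨hb, ha⟩⟩⟩
  loopless := ⟨by rintro a ⟨h, -⟩; exact h rfl⟩

/-- `G ⊙ v`: remove all edges between any pair of neighbors of `v`. -/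
def odotVtx {V : Type*} (G : SimpleGraph V) (v : V) : SimpleGraph V where
  Adj x y := G.Adj x y ∧ ¬(G.Adj v x ∧ G.Adj v y)
  symm := ⟨by
    rintro x y ⟨h, hn⟩
    exact ⟨h.symm, fun hc => hn ⟨hc.2, hc.1⟩⟩⟩
  loopless := ⟨by rintro x ⟨h, -⟩; exact G.irrefl h⟩

/-- Edge contraction `G / uv`: merge `v` into `u`. -/
def contractEdge {V : Type*} (G : SimpleGraph V) (u v : V) : SimpleGraph {x : V // x ≠ v} where
  Adj a b := a ≠ b ∧ (G.Adj a.1 b.1 ∨ (a.1 = u ∧ G.Adj v b.1) ∨ (b.1 = u ∧ G.Adj v a.1))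
  symm := ⟨by
    rintro a b ⟨hab, h | h | h⟩
    · exact ⟨hab.symm, Or.inl h.symm⟩
    · exact ⟨hab.symm, Or.inr (Or.inr h)⟩
    · exact ⟨hab.symm, Or.inr (Or.inl h)⟩⟩
  loopless := ⟨by rintro a ⟨h, -⟩; exact h rfl⟩

/-- The star `K_{1,n}` with center `none` and leaves `some i`. -/
def starG (n : ℕ) : SimpleGraph (Option (Fin n)) where
  Adj a b := (a = none ∧ b ≠ none) ∨ (a ≠ none ∧ b = none)
  symm := ⟨by
    rintro a b (⟨h1, h2⟩ | ⟨h1, h2⟩)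
    · exact Or.inr ⟨h2, h1⟩
    · exact Or.inl ⟨h2, h1⟩⟩
  loopless := ⟨by
    rintro a (⟨h1, h2⟩ | ⟨h1, h2⟩)
    exacts [h2 h1, h1 h2]⟩

/-- The path graph `P_n` on vertices `0, …, n-1`, consecutive integers adjacent. -/
def pathG (n : ℕ) : SimpleGraph (Fin n) where
  Adj i j := i.1 + 1 = j.1 ∨ j.1 + 1 = i.1
  symm := ⟨by intro i j h; exact h.symm⟩
  loopless := ⟨by rintro i (h | h) <;> omega⟩

lemma card_ne_none (n : ℕ) : Nat.card {x : Option (Fin n) // x ≠ none} = n := by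
  rw [Nat.card_eq_fintype_card]
  have : Fintype.card {x : Option (Fin n) // ¬ x = none} =
      Fintype.card (Option (Fin n)) - Fintype.card {x : Option (Fin n) // x = none} :=
    Fintype.card_subtype_compl _
  simpa using this

lemma sdeg_center (n : ℕ) : sdeg (starG n) (none : Option (Fin n)) = n := by
  have hset : (starG n).neighborSet (none : Option (Fin n)) = {b | b ≠ none} := by
    ext b
    simp [SimpleGraph.neighborSet, starG]
  rw [sdeg, hset, ← Nat.card_coe_set_eq]
  exact card_ne_none n

lemma sdeg_leaf (n : ℕ) (i : Fin n) : sdeg (starG n) (some i) = 1 := by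
  have hset : (starG n).neighborSet (some i) = {none} := by
    ext b
    simp [SimpleGraph.neighborSet, starG]
  rw [sdeg, hset, Set.ncard_singleton]

lemma sdn_star (n : ℕ) (hn : 2 ≤ n) : sdn (starG n) = 1 := by
  have h1 : (1 : ℕ) ∈ {m | ∃ D : Set (Option (Fin n)), IsStrongDominating (starG n) D ∧ D.ncard = m} := by
    refine ⟨{none}, ?_, Set.ncard_singleton _⟩
    intro x hx
    refine ⟨none, rfl, ?_, ?_⟩
    · right
      exact ⟨by simpa using hx, rfl⟩
    · obtain ⟨i, rfl⟩ : ∃ i, x = some i := by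
        cases x with
        | none => exact absurd rfl hx
        | some i => exact ⟨i, rfl⟩
      rw [sdeg_leaf, sdeg_center]
      omega
  have h0 : (0 : ℕ) ∉ {m | ∃ D : Set (Option (Fin n)), IsStrongDominating (starG n) D ∧ D.ncard = m} := by
    rintro ⟨D, hD, hcard⟩
    have hfin : D.Finite := Set.toFinite D
    have hempty : D = ∅ := (Set.ncard_eq_zero hfin).mp hcard
    subst hempty
    obtain ⟨y, hy, -⟩ := hD none (by simp)
    exact hy
  refine le_antisymm (Nat.sInf_le h1) ?_
  rcases Nat.eq_zero_or_pos (sInf {m | ∃ D : Set (Option (Fin n)), IsStrongDominating (starG n) D ∧ D.ncard = m}) with h | h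
  · rw [Nat.sInf_eq_zero] at h
    rcases h with h | h
    · exact absurd h h0
    · exact absurd h1 (h ▸ Set.notMem_empty 1)
  · exact h

lemma sdn_del_star (n : ℕ) : sdn (delVtx (starG n) (none : Option (Fin n))) = n := by
  have hadj : ∀ a b : {x : Option (Fin n) // x ≠ none},
      ¬ (delVtx (starG n) (none : Option (Fin n))).Adj a b := by
    rintro a b (⟨h1, -⟩ | ⟨-, h2⟩)
    · exact a.2 h1
    · exact b.2 h2
  have hSD : ∀ D : Set {x : Option (Fin n) // x ≠ none},
      IsStrongDominating (delVtx (starG n) none) D ↔ D = Set.univ := by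
    intro D
    constructor
    · intro hD
      ext x
      simp only [Set.mem_univ, iff_true]
      by_contra hx
      obtain ⟨y, -, hadj', -⟩ := hD x hx
      exact hadj x y hadj'
    · rintro rfl x hx
      exact absurd (Set.mem_univ x) hx
  have hset : {m | ∃ D : Set {x : Option (Fin n) // x ≠ none},
      IsStrongDominating (delVtx (starG n) none) D ∧ D.ncard = m} = {n} := by
    ext m
    constructor
    · rintro ⟨D, hD, rfl⟩
      rw [hSD] at hD
      subst hD
      simp [Set.ncard_univ, card_ne_none]
    · rintro rfl
      exact ⟨Set.univ, (hSD _).mpr rfl, by simp [Set.ncard_univ, card_ne_none]⟩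
  rw [sdn, hset, csInf_singleton]

/-- for n ≥ 2 and the center v of the star K_{1,n},
γst(K_{1,n} − v) = γst(K_{1,n}) + deg(v) − 1 and γst(K_{1,n} − v) = n. -/
theorem star_delete_center_tight (n : ℕ) (hn : 2 ≤ n) :
    (sdn (delVtx (starG n) (none : Option (Fin n))) : ℤ)
        = (sdn (starG n) : ℤ) + (sdeg (starG n) (none : Option (Fin n)) : ℤ) - 1 ∧
    sdn (delVtx (starG n) (none : Option (Fin n))) = n := by
  rw [sdn_del_star, sdn_star n hn, sdeg_center]
  constructor
  · omega
  · rfl
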